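/- Let P ⊆ ℝ^D be a polyhedron and let f be a nonempty bounded face of P of dimension k. Then there exists a set W of at most k + 1 vertices of P, all contained in f, such that f = P ∩ aff(W), where aff(W) denotes the affine hull of W. -/

import Mathlib

open Set Classical

/-- `f` is an (exposed) face of `P`: the empty set, `P` itself, or the set of maximizers
of a linear functional over `P`. -/
def IsFace {V : Type*} [AddCommGroup V] [Module ℝ V] (P f : Set V) : Prop :=
  f = ∅ ∨ f = P ∨ ∃ l : V →ₗ[ℝ] ℝ, f = {x ∈ P | ∀ y ∈ P, l y ≤ l x}

/-- `v` is a vertex of `P`: the singleton `{v}` is a face of `P`. -/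
def IsVertex {V : Type*} [AddCommGroup V] [Module ℝ V] (P : Set V) (v : V) : Prop :=
  IsFace P {v}

/-- Dimension of a face: `-1` for the empty face, otherwise the dimension of its
affine hull. -/
noncomputable def faceDim {V : Type*} [AddCommGroup V] [Module ℝ V] (f : Set V) : ℤ :=
  if f = ∅ then -1 else (Module.finrank ℝ (affineSpan ℝ f).direction : ℤ)

/-- The dot-product-with-`c` linear functional. -/
noncomputable def dotLM {D : ℕ} (c : Fin D → ℝ) : (Fin D → ℝ) →ₗ[ℝ] ℝ where
  toFun x := ∑ j, c j * x j
  map_add' x y := by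
    simp only [Pi.add_apply, mul_add]
    rw [Finset.sum_add_distrib]
  map_smul' r x := by
    simp only [Pi.smul_apply, smul_eq_mul, RingHom.id_apply, Finset.mul_sum]
    exact Finset.sum_congr rfl fun j _ => by ring

lemma extreme_vertex {D n : ℕ} (a : Fin n → Fin D → ℝ) (b : Fin n → ℝ)
    (P : Set (Fin D → ℝ)) (hP : P = ⋂ i, {x | ∑ j, a i j * x j ≤ b i})
    {v : Fin D → ℝ} (hv : v ∈ P.extremePoints ℝ) : IsVertex P v := by
  classical
  have hmem : ∀ x : Fin D → ℝ, x ∈ P ↔ ∀ i, ∑ j, a i j * x j ≤ b i := by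
    intro x
    rw [hP]
    simp [Set.mem_iInter]
  have hvP : v ∈ P := hv.1
  set I : Finset (Fin n) := Finset.univ.filter (fun i => ∑ j, a i j * v j = b i) with hI
  set l : (Fin D → ℝ) →ₗ[ℝ] ℝ := ∑ i ∈ I, dotLM (a i) with hldef
  have hlx : ∀ x : Fin D → ℝ, l x = ∑ i ∈ I, ∑ j, a i j * x j := by
    intro x
    simp [hldef, dotLM]
  refine Or.inr (Or.inr ⟨l, ?_⟩)
  have hlv : l v = ∑ i ∈ I, b i := by
    rw [hlx]
    exact Finset.sum_congr rfl fun i hi => (Finset.mem_filter.1 hi).2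
  have hmax : ∀ y ∈ P, l y ≤ l v := by
    intro y hy
    rw [hlx, hlv]
    exact Finset.sum_le_sum fun i _ => (hmem y).1 hy i
  ext x
  simp only [Set.mem_singleton_iff, Set.mem_setOf_eq]
  constructor
  · rintro rfl
    exact ⟨hvP, hmax⟩
  · rintro ⟨hxP, hxmax⟩
    -- x satisfies the binding constraints with equality
    have hsum : ∑ i ∈ I, b i ≤ ∑ i ∈ I, ∑ j, a i j * x j := by
      have := hxmax v hvP
      rw [hlv] at this
      rwa [hlx x] at this
    have hle : ∀ i ∈ I, ∑ j, a i j * x j ≤ b i := fun i _ => (hmem x).1 hxP i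
    have heqI : ∀ i ∈ I, ∑ j, a i j * x j = b i := by
      intro i hi
      by_contra hne
      have hlt : ∑ j, a i j * x j < b i := lt_of_le_of_ne (hle i hi) hne
      have : ∑ i ∈ I, ∑ j, a i j * x j < ∑ i ∈ I, b i :=
        Finset.sum_lt_sum hle ⟨i, hi, hlt⟩
      linarith
    by_contra hxv
    set w : Fin D → ℝ := x - v with hw
    have hw0 : w ≠ 0 := sub_ne_zero.2 hxv
    have hdw : ∀ i, ∑ j, a i j * w j = (∑ j, a i j * x j) - ∑ j, a i j * v j := by
      intro i
      rw [← Finset.sum_sub_distrib]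
      exact Finset.sum_congr rfl fun j _ => by simp [hw]; ring
    have hdwI : ∀ i ∈ I, ∑ j, a i j * w j = 0 := by
      intro i hi
      rw [hdw, heqI i hi, (Finset.mem_filter.1 hi).2, sub_self]
    have hstrict : ∀ i ∉ I, ∑ j, a i j * v j < b i := by
      intro i hi
      refine lt_of_le_of_ne ((hmem v).1 hvP i) ?_
      intro heq
      exact hi (Finset.mem_filter.2 ⟨Finset.mem_univ i, heq⟩)
    set c : Fin n → ℝ := fun i => (b i - ∑ j, a i j * v j) / (|∑ j, a i j * w j| + 1) with hc
    set S : Finset ℝ := insert 1 ((Finset.univ.filter (fun i => i ∉ I)).image c) with hS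
    have hSne : S.Nonempty := ⟨1, Finset.mem_insert_self _ _⟩
    set ε : ℝ := S.min' hSne with hε
    have hε0 : 0 < ε := by
      rw [hε, Finset.lt_min'_iff]
      intro y hy
      rw [hS, Finset.mem_insert] at hy
      rcases hy with rfl | hy
      · norm_num
      · obtain ⟨i, hi, rfl⟩ := Finset.mem_image.1 hy
        have hi' : i ∉ I := (Finset.mem_filter.1 hi).2
        exact div_pos (sub_pos.2 (hstrict i hi')) (by positivity)
    have hεc : ∀ i ∉ I, ε * |∑ j, a i j * w j| ≤ b i - ∑ j, a i j * v j := by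
      intro i hi
      have h1 : ε ≤ c i := Finset.min'_le _ _ (by
        rw [hS]
        exact Finset.mem_insert_of_mem (Finset.mem_image.2
          ⟨i, Finset.mem_filter.2 ⟨Finset.mem_univ i, hi⟩, rfl⟩))
      have hpos : (0:ℝ) < |∑ j, a i j * w j| + 1 := by positivity
      have h2 : ε * (|∑ j, a i j * w j| + 1) ≤ b i - ∑ j, a i j * v j := by
        rw [← le_div_iff₀ hpos]
        exact h1
      nlinarith [abs_nonneg (∑ j, a i j * w j)]
    have hP2 : ∀ s : ℝ, |s| ≤ ε → v + s • w ∈ P := by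
      intro s hs
      rw [hmem]
      intro i
      have hcomp : ∑ j, a i j * (v + s • w) j
          = (∑ j, a i j * v j) + s * ∑ j, a i j * w j := by
        rw [Finset.mul_sum, ← Finset.sum_add_distrib]
        exact Finset.sum_congr rfl fun j _ => by simp; ring
      rw [hcomp]
      by_cases hi : i ∈ I
      · rw [hdwI i hi, mul_zero, add_zero, (Finset.mem_filter.1 hi).2]
      · have habs : s * ∑ j, a i j * w j ≤ ε * |∑ j, a i j * w j| := by
          calc s * ∑ j, a i j * w j ≤ |s * ∑ j, a i j * w j| := le_abs_self _
          _ = |s| * |∑ j, a i j * w j| := abs_mul _ _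
          _ ≤ ε * |∑ j, a i j * w j| := by
              exact mul_le_mul_of_nonneg_right hs (abs_nonneg _)
        have := hεc i hi
        linarith
    have hp1 : v + ε • w ∈ P := hP2 ε (by rw [abs_of_pos hε0])
    have hp2 : v + (-ε) • w ∈ P := hP2 (-ε) (by rw [abs_neg, abs_of_pos hε0])
    have hseg : v ∈ openSegment ℝ (v + ε • w) (v + (-ε) • w) := by
      refine ⟨1/2, 1/2, by norm_num, by norm_num, by norm_num, ?_⟩
      funext j
      simp only [Pi.add_apply, Pi.smul_apply, smul_eq_mul, Pi.neg_apply]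
      ring
    have := hv.2 hp1 hp2 hseg
    have hεw : ε • w = 0 := by
      rwa [add_eq_left] at this
    exact hw0 (smul_eq_zero.1 hεw |>.resolve_left (ne_of_gt hε0))

theorem bounded_face_affine_hull (D n : ℕ)
    (a : Fin n → Fin D → ℝ) (b : Fin n → ℝ) (ha : ∀ i, a i ≠ 0)
    (P : Set (Fin D → ℝ)) (hP : P = ⋂ i, {x | ∑ j, a i j * x j ≤ b i})
    (f : Set (Fin D → ℝ)) (k : ℕ)
    (hf : IsFace P f) (hne : f.Nonempty) (hbdd : Bornology.IsBounded f)
    (hk : faceDim f = (k : ℤ)) :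
    ∃ W : Finset (Fin D → ℝ), W.card ≤ k + 1 ∧
      (∀ w ∈ W, IsVertex P w ∧ w ∈ f) ∧
      f = P ∩ (affineSpan ℝ (W : Set (Fin D → ℝ)) : Set (Fin D → ℝ)) := by
  classical
  -- reduce to the exposed-by-a-functional case
  obtain ⟨l, hl⟩ : ∃ l : (Fin D → ℝ) →ₗ[ℝ] ℝ, f = {x ∈ P | ∀ y ∈ P, l y ≤ l x} := by
    rcases hf with h | h | h
    · exact absurd h hne.ne_empty
    · refine ⟨0, ?_⟩
      rw [h]
      ext x
      simp
    · exact h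
  have hfP : f ⊆ P := by rw [hl]; exact fun x hx => hx.1
  -- f is closed
  have hPc : IsClosed P := by
    rw [hP]
    refine isClosed_iInter fun i => ?_
    exact isClosed_le (continuous_finset_sum _ fun j _ => continuous_const.mul (continuous_apply j)) continuous_const
  have hlc : Continuous l := l.continuous_of_finiteDimensional
  have hfc : IsClosed f := by
    have : f = P ∩ ⋂ y ∈ P, {x | l y ≤ l x} := by
      rw [hl]; ext x; simp [Set.mem_iInter]
    rw [this]
    exact hPc.inter (isClosed_biInter fun y _ => isClosed_le continuous_const hlc)
  have hfcomp : IsCompact f := Metric.isCompact_of_isClosed_isBounded hfc hbdd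
  have hPconv : Convex ℝ P := by
    rw [hP]
    refine convex_iInter fun i => ?_
    intro x hx y hy s t hs ht hst
    simp only [Set.mem_setOf_eq] at hx hy ⊢
    have hc : ∑ j, a i j * (s • x + t • y) j
        = s * ∑ j, a i j * x j + t * ∑ j, a i j * y j := by
      rw [Finset.mul_sum, Finset.mul_sum, ← Finset.sum_add_distrib]
      exact Finset.sum_congr rfl fun j _ => by
        simp only [Pi.add_apply, Pi.smul_apply, smul_eq_mul]
        ring
    rw [hc]
    have h1 := mul_le_mul_of_nonneg_left hx hs
    have h2 := mul_le_mul_of_nonneg_left hy ht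
    have h3 : s * b i + t * b i = b i := by rw [← add_mul, hst, one_mul]
    linarith
  have hfconv : Convex ℝ f := by
    rw [hl]
    intro x hx y hy s t hs ht hst
    refine ⟨hPconv hx.1 hy.1 hs ht hst, fun z hz => ?_⟩
    have h1 := hx.2 z hz
    have h2 := hy.2 z hz
    have hlz : l (s • x + t • y) = s * l x + t * l y := by
      simp [map_add, map_smul, smul_eq_mul]
    rw [hlz]
    have h3 := mul_le_mul_of_nonneg_left h1 hs
    have h4 := mul_le_mul_of_nonneg_left h2 ht
    have h5 : s * l z + t * l z = l z := by rw [← add_mul, hst, one_mul]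
    linarith
  -- Krein-Milman
  set E : Set (Fin D → ℝ) := f.extremePoints ℝ with hE
  have hKM : closure (convexHull ℝ E) = f := closure_convexHull_extremePoints hfcomp hfconv
  have hEf : E ⊆ f := extremePoints_subset
  have hspan : affineSpan ℝ E = affineSpan ℝ f := by
    refine le_antisymm (affineSpan_mono ℝ hEf) (affineSpan_le.2 ?_)
    have h1 : convexHull ℝ E ⊆ (affineSpan ℝ E : Set (Fin D → ℝ)) :=
      convexHull_subset_affineSpan E
    have h2 : closure (convexHull ℝ E) ⊆ (affineSpan ℝ E : Set (Fin D → ℝ)) :=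
      closure_minimal h1 (affineSpan ℝ E).closed_of_finiteDimensional
    rw [hKM] at h2
    exact h2
  -- choose an affinely independent spanning subset of the extreme points
  obtain ⟨t, htE, htspan, htind⟩ := exists_affineIndependent ℝ (Fin D → ℝ) E
  have htfin : t.Finite := finite_set_of_fin_dim_affineIndependent ℝ htind
  set W : Finset (Fin D → ℝ) := htfin.toFinset with hWdef
  have hWt : (W : Set (Fin D → ℝ)) = t := htfin.coe_toFinset
  have hWspan : affineSpan ℝ (W : Set (Fin D → ℝ)) = affineSpan ℝ f := by
    rw [hWt, htspan, hspan]
  have hkdim : Module.finrank ℝ (affineSpan ℝ f).direction = k := by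
    have h := hk
    rw [faceDim, if_neg hne.ne_empty] at h
    exact_mod_cast h
  have hcard : W.card ≤ k + 1 := by
    haveI : Fintype t := htfin.fintype
    have h1 : Fintype.card t ≤
        Module.finrank ℝ (vectorSpan ℝ (Set.range ((↑) : t → (Fin D → ℝ)))) + 1 :=
      htind.card_le_finrank_succ
    rw [Subtype.range_coe] at h1
    have h2 : vectorSpan ℝ t = (affineSpan ℝ f).direction := by
      rw [← direction_affineSpan, htspan, hspan]
    rw [h2, hkdim] at h1
    calc W.card = Fintype.card t := Set.Finite.card_toFinset _
    _ ≤ k + 1 := h1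
  -- the linear functional is constant on the affine span of f
  obtain ⟨v₀, hv₀⟩ := hne
  have hv₀' : v₀ ∈ {x ∈ P | ∀ y ∈ P, l y ≤ l x} := hl ▸ hv₀
  have hconst : ∀ x ∈ affineSpan ℝ f, l x = l v₀ := by
    have hle : affineSpan ℝ f ≤ AffineSubspace.comap l.toAffineMap
        (AffineSubspace.mk' (l v₀) (⊥ : Submodule ℝ ℝ)) := by
      apply affineSpan_le.2
      intro y hy
      have hy' : y ∈ {x ∈ P | ∀ x' ∈ P, l x' ≤ l x} := hl ▸ hy
      have heq : l y = l v₀ := le_antisymm (hv₀'.2 y (hfP hy)) (hy'.2 v₀ (hfP hv₀))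
      show l.toAffineMap y ∈ AffineSubspace.mk' (l v₀) (⊥ : Submodule ℝ ℝ)
      rw [AffineSubspace.mem_mk']
      simp [heq]
    intro x hx
    have h : l.toAffineMap x ∈ AffineSubspace.mk' (l v₀) (⊥ : Submodule ℝ ℝ) :=
      AffineSubspace.mem_comap.mp (hle hx)
    rw [AffineSubspace.mem_mk'] at h
    simpa [sub_eq_zero] using h
  -- exposedness
  have hexp : IsExposed ℝ P f := fun _ => ⟨⟨l, hlc⟩, hl⟩
  refine ⟨W, hcard, ?_, ?_⟩
  · intro w hw
    have hwE : w ∈ E := htE (by rwa [← hWt])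
    refine ⟨?_, hEf hwE⟩
    have hwP : w ∈ P.extremePoints ℝ :=
      hexp.isExtreme.extremePoints_subset_extremePoints hwE
    exact extreme_vertex a b P hP hwP
  · apply Set.Subset.antisymm
    · intro x hx
      refine ⟨hfP hx, ?_⟩
      have hxs : x ∈ affineSpan ℝ f := subset_affineSpan ℝ f hx
      rw [hWspan]
      exact hxs
    · rintro x ⟨hxP, hxW⟩
      have hx' : x ∈ affineSpan ℝ f := by rw [← hWspan]; exact hxW
      have hlx := hconst x hx'
      rw [hl]
      exact ⟨hxP, fun y hy => by rw [hlx]; exact hv₀'.2 y hy⟩
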